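/- For real q > 1 and positive integers r, s with real t such that all series converge, the q-Tornheim sum T[r,s,t] := Σ_{u,v≥1} q^{(r+t−1)u+(s+t−1)v}/([u]_q^r [v]_q^s [u+v]_q^t) equals Σ_{a=0}^{r-1} Σ_{b=0}^{r-1-a} C(a+s-1; a, b) (1−q)^b ζ_q[s+t+a, r−a−b] + Σ_{a=0}^{s-1} Σ_{b=0}^{s-1-a} C(a+r-1; a, b) (1−q)^b ζ_q[r+t+a, s−a−b] − Σ_{j=1}^{min(r,s)} C(r+s−j−1; r−j, s−j) (1−q)^j φ[r+s+t−j], where ζ_q[p, w] := Σ_{m>n≥1} q^{(p−1)m} q^{(w−1)n}/([m]_q^p [n]_q^w) and φ[w] := Σ_{n≥1} (n−1) q^{(w−1)n}/[n]_q^w. -/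

import Mathlib

/-- The q-analog of a natural number: `[n]_q = (q^n - 1)/(q - 1)`. -/
noncomputable def qa (q : ℝ) (n : ℕ) : ℝ := (q ^ n - 1) / (q - 1)

/-- The double q-zeta value `ζ_q[p, w] = Σ_{m>n≥1} q^{(p-1)m + (w-1)n} / ([m]_q^p [n]_q^w)`,
with `p` real and `w` a positive integer. -/
noncomputable def qzeta (q : ℝ) (p : ℝ) (w : ℕ) : ℝ :=
  ∑' (i : ℕ) (j : ℕ),
    q ^ ((p - 1) * ((i : ℝ) + (j : ℝ) + 2) + ((w : ℝ) - 1) * ((j : ℝ) + 1)) /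
      (qa q (i + j + 2) ^ p * qa q (j + 1) ^ w)

/-- `φ[w] = Σ_{n≥1} (n-1) q^{(w-1)n} / [n]_q^w`. -/
noncomputable def qphi (q : ℝ) (w : ℝ) : ℝ :=
  ∑' n : ℕ, (n : ℝ) * q ^ ((w - 1) * ((n : ℝ) + 1)) / qa q (n + 1) ^ w

open Finset

/-- Pascal splitting in one direction. -/
lemma pasc (k n : ℕ) (g : ℕ → ℝ) :
    ∑ b ∈ range (k+1), ((n+1).choose b : ℝ) * g b
      = ∑ b ∈ range (k+1), (n.choose b : ℝ) * g b
        + ∑ b ∈ range k, (n.choose b : ℝ) * g (b+1) := by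
  rw [Finset.sum_range_succ' (fun b => ((n+1).choose b : ℝ) * g b),
      Finset.sum_range_succ' (fun b => ((n:ℕ).choose b : ℝ) * g b)]
  simp only [Nat.choose_succ_succ, Nat.choose_zero_right, Nat.cast_add, Nat.cast_one]
  have h : ∀ x ∈ range k, ((n.choose x : ℝ) + (n.choose (x+1) : ℝ)) * g (x+1)
      = (n.choose (x+1) : ℝ) * g (x+1) + (n.choose x : ℝ) * g (x+1) := by
    intro x _; ring
  rw [Finset.sum_congr rfl h, Finset.sum_add_distrib]
  ring

/-- The triangular double-sum Pascal recurrence. -/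
lemma tri (m n : ℕ) (T : ℕ → ℕ → ℝ) :
    ∑ a ∈ range (m+2), ∑ b ∈ range (m+2-a), ((a+n+1).choose a * (n+1).choose b : ℝ) * T a b
      = (∑ a ∈ range (m+2), ∑ b ∈ range (m+2-a), ((a+n).choose a * n.choose b : ℝ) * T a b)
        + (∑ a ∈ range (m+1), ∑ b ∈ range (m+1-a),
            ((a+n+1).choose a * (n+1).choose b : ℝ) * T (a+1) b)
        + (∑ a ∈ range (m+1), ∑ b ∈ range (m+1-a),
            ((a+n).choose a * n.choose b : ℝ) * T a (b+1)) := by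
  have inner : ∀ α : ℕ, α ≤ m+1 →
      ∑ b ∈ range (m+2-α), (((n+1).choose b : ℝ)) * T α b
        = ∑ b ∈ range (m+2-α), ((n.choose b : ℝ)) * T α b
          + ∑ b ∈ range (m+1-α), ((n.choose b : ℝ)) * T α (b+1) := by
    intro α hα
    have h2 : m+2-α = (m+1-α)+1 := by omega
    rw [h2]
    exact pasc (m+1-α) n (fun b => T α b)
  -- Define J and K
  set J : ℕ → ℝ := fun α => ∑ b ∈ range (m+2-α), ((n.choose b : ℝ)) * T α b with hJ
  set K : ℕ → ℝ := fun α => ∑ b ∈ range (m+1-α), ((n.choose b : ℝ)) * T α (b+1) with hK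
  -- rewrite LHS with coefficient factored
  have lhs_eq : ∑ a ∈ range (m+2), ∑ b ∈ range (m+2-a), ((a+n+1).choose a * (n+1).choose b : ℝ) * T a b
      = ∑ a ∈ range (m+2), ((a+n+1).choose a : ℝ) * (J a + K a) := by
    apply Finset.sum_congr rfl
    intro a ha
    have ha' : a ≤ m+1 := by simpa [Nat.lt_succ_iff] using Finset.mem_range.mp ha
    rw [← inner a ha']
    rw [Finset.mul_sum]
    apply Finset.sum_congr rfl
    intro b _
    push_cast
    ring
  rw [lhs_eq]
  -- split LHS in the a-direction
  rw [Finset.sum_range_succ' (fun a => ((a+n+1).choose a : ℝ) * (J a + K a))]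
  -- piece1 rewrite
  have p1 : ∑ a ∈ range (m+2), ∑ b ∈ range (m+2-a), ((a+n).choose a * n.choose b : ℝ) * T a b
      = ∑ a ∈ range (m+2), ((a+n).choose a : ℝ) * J a := by
    apply Finset.sum_congr rfl
    intro a _
    rw [Finset.mul_sum]
    apply Finset.sum_congr rfl
    intro b _; push_cast; ring
  have p2 : ∑ a ∈ range (m+1), ∑ b ∈ range (m+1-a),
        ((a+n+1).choose a * (n+1).choose b : ℝ) * T (a+1) b
      = ∑ a ∈ range (m+1), ((a+n+1).choose a : ℝ) * (J (a+1) + K (a+1)) := by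
    apply Finset.sum_congr rfl
    intro a ha
    have ha' : a + 1 ≤ m + 1 := by
      have := Finset.mem_range.mp ha; omega
    have h3 : m+1-a = m+2-(a+1) := by omega
    rw [h3, ← inner (a+1) ha', Finset.mul_sum]
    apply Finset.sum_congr rfl
    intro b _; push_cast; ring
  have p3 : ∑ a ∈ range (m+1), ∑ b ∈ range (m+1-a),
        ((a+n).choose a * n.choose b : ℝ) * T a (b+1)
      = ∑ a ∈ range (m+1), ((a+n).choose a : ℝ) * K a := by
    apply Finset.sum_congr rfl
    intro a _
    rw [Finset.mul_sum]
    apply Finset.sum_congr rfl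
    intro b _; push_cast; ring
  rw [p1, p2, p3]
  -- split piece1 (a-direction) and the K-sum
  rw [Finset.sum_range_succ' (fun a => ((a+n).choose a : ℝ) * J a)]
  -- now: Σ_{a<m+1} C(a+1+n+1, a+1)(J(a+1)+K(a+1)) + C(n+1,0)... 
  have key : ∀ a : ℕ, ((a+1+n+1).choose (a+1) : ℝ) = ((a+n+1).choose a : ℝ) + ((a+n+1).choose (a+1) : ℝ) := by
    intro a
    have : (a+1+n+1) = (a+n+1)+1 := by ring
    rw [this, Nat.choose_succ_succ (a+n+1) a]
    push_cast; ring
  -- K-sum refold: K(0) + Σ_{a<m+1} C(a+n+1,a+1) K(a+1) = Σ_{a<m+2} C(a+n,a) K a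
  have krefold : (((0:ℕ)+n+1).choose 0 : ℝ) * K 0
        + ∑ a ∈ range (m+1), ((a+n+1).choose (a+1) : ℝ) * K (a+1)
      = ∑ a ∈ range (m+2), ((a+n).choose a : ℝ) * K a := by
    rw [Finset.sum_range_succ' (fun a => ((a+n).choose a : ℝ) * K a)]
    simp only [Nat.choose_zero_right, Nat.cast_one]
    rw [add_comm]
    congr 1
    apply Finset.sum_congr rfl
    intro a _
    have h : a+1+n = a+n+1 := by omega
    rw [h]
  have ktop : K (m+1) = 0 := by simp [hK]
  have ksum : ∑ a ∈ range (m+2), ((a+n).choose a : ℝ) * K a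
      = ∑ a ∈ range (m+1), ((a+n).choose a : ℝ) * K a := by
    rw [Finset.sum_range_succ, ktop]; ring
  calc ∑ a ∈ range (m+1), ((a+1+n+1).choose (a+1) : ℝ) * (J (a+1) + K (a+1))
        + ((0+n+1).choose 0 : ℝ) * (J 0 + K 0)
      = (∑ a ∈ range (m+1), (((a+n+1).choose a : ℝ) * (J (a+1) + K (a+1))
          + ((a+n+1).choose (a+1) : ℝ) * (J (a+1) + K (a+1))))
        + ((0+n+1).choose 0 : ℝ) * (J 0 + K 0) := by
        congr 1
        apply Finset.sum_congr rfl
        intro a _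
        rw [key a]; ring
    _ = (∑ a ∈ range (m+1), ((a+1+n).choose (a+1) : ℝ) * J (a+1) + ((0:ℕ)+n).choose 0 * J 0)
        + ∑ a ∈ range (m+1), ((a+n+1).choose a : ℝ) * (J (a+1) + K (a+1))
        + ∑ a ∈ range (m+1), ((a+n).choose a : ℝ) * K a := by
        rw [Finset.sum_add_distrib]
        rw [← ksum, ← krefold]
        simp only [Nat.choose_zero_right, Nat.cast_one]
        have : ∀ a : ℕ, ((a+n+1).choose (a+1) : ℝ) * (J (a+1) + K (a+1))
            = ((a+1+n).choose (a+1) : ℝ) * J (a+1) + ((a+n+1).choose (a+1) : ℝ) * K (a+1) := by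
          intro a
          have : a+1+n = a+n+1 := by ring
          rw [this]; ring
        rw [Finset.sum_congr rfl (fun a _ => this a), Finset.sum_add_distrib]
        ring
    _ = _ := by ring


/-- The diagonal (phi) sum Pascal recurrence. -/
lemma s3rec (m n : ℕ) (T : ℕ → ℝ) :
    ∑ i ∈ range (m+2), ((m+n+2-i).choose (m+1-i) * (n+1).choose i : ℝ) * T i
      = ∑ i ∈ range (m+2), ((m+n+1-i).choose (m+1-i) * n.choose i : ℝ) * T i
        + ∑ i ∈ range (m+1), ((m+n+1-i).choose (m-i) * (n+1).choose i : ℝ) * T i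
        + ∑ i ∈ range (m+1), ((m+n-i).choose (m-i) * n.choose i : ℝ) * T (i+1) := by
  -- split the top term (i = m+1) of the two (m+2)-sums
  rw [Finset.sum_range_succ (fun i => ((m+n+2-i).choose (m+1-i) * (n+1).choose i : ℝ) * T i)]
  rw [Finset.sum_range_succ (fun i => ((m+n+1-i).choose (m+1-i) * n.choose i : ℝ) * T i)]
  have htop1 : (m+n+2-(m+1)) = n+1 := by omega
  have htop2 : (m+1-(m+1)) = 0 := by omega
  have htop3 : (m+n+1-(m+1)) = n := by omega
  simp only [htop1, htop2, htop3, Nat.choose_zero_right, one_mul]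
  -- Pascal on the first coefficient for i ≤ m
  have split1 : ∀ i ∈ range (m+1),
      ((m+n+2-i).choose (m+1-i) * (n+1).choose i : ℝ) * T i
        = ((m+n+1-i).choose (m+1-i) * n.choose i : ℝ) * T i
          + ((m+n+1-i).choose (m-i) * (n+1).choose i : ℝ) * T i
          + (((m+n+1-i).choose (m+1-i) : ℝ) * ((n+1).choose i : ℝ)
              - ((m+n+1-i).choose (m+1-i) : ℝ) * (n.choose i : ℝ)) * T i := by
    intro i hi
    have hi' : i ≤ m := by have := Finset.mem_range.mp hi; omega
    have e1 : m+n+2-i = (m+n+1-i)+1 := by omega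
    have e2 : m+1-i = (m-i)+1 := by omega
    rw [e1, e2, Nat.choose_succ_succ]
    simp only [Nat.succ_eq_add_one]
    have e3 : (m-i)+1 = m+1-i := by omega
    rw [e3]
    push_cast
    ring
  rw [Finset.sum_congr rfl split1]
  rw [Finset.sum_add_distrib, Finset.sum_add_distrib]
  -- remains: Σ_{i<m+1} B_i (C(n+1,i)-C(n,i)) T i + C(n+1,m+1) T(m+1)
  --        = C(n,m+1) T(m+1) + Σ_{i<m+1} E_i C(n,i) T(i+1)
  have key : ∑ i ∈ range (m+1),
        (((m+n+1-i).choose (m+1-i) : ℝ) * ((n+1).choose i : ℝ)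
          - ((m+n+1-i).choose (m+1-i) : ℝ) * (n.choose i : ℝ)) * T i
        + ((n+1).choose (m+1) : ℝ) * T (m+1)
      = (n.choose (m+1) : ℝ) * T (m+1)
        + ∑ i ∈ range (m+1), ((m+n-i).choose (m-i) * n.choose i : ℝ) * T (i+1) := by
    have hs1 : ∑ i ∈ range (m+1),
          (((m+n+1-i).choose (m+1-i) : ℝ) * ((n+1).choose i : ℝ)) * T i
        = ∑ i ∈ range (m+1),
          (((m+n+1-i).choose (m+1-i) : ℝ) * ((n).choose i : ℝ)) * T i
          + ∑ i ∈ range m,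
            (((m+n-i).choose (m-i) : ℝ) * ((n).choose i : ℝ)) * T (i+1) := by
      rw [Finset.sum_range_succ' (fun i => (((m+n+1-i).choose (m+1-i) : ℝ) * ((n+1).choose i : ℝ)) * T i)]
      rw [Finset.sum_range_succ' (fun i => (((m+n+1-i).choose (m+1-i) : ℝ) * ((n).choose i : ℝ)) * T i)]
      have hc : ∀ i ∈ range m,
          (((m+n+1-(i+1)).choose (m+1-(i+1)) : ℝ) * ((n+1).choose (i+1) : ℝ)) * T (i+1)
            = (((m+n+1-(i+1)).choose (m+1-(i+1)) : ℝ) * ((n).choose (i+1) : ℝ)) * T (i+1)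
              + (((m+n-i).choose (m-i) : ℝ) * ((n).choose i : ℝ)) * T (i+1) := by
        intro i hi
        have e4 : m+n+1-(i+1) = m+n-i := by omega
        have e5 : m+1-(i+1) = m-i := by omega
        rw [e4, e5, Nat.choose_succ_succ n i]
        push_cast
        ring
      rw [Finset.sum_congr rfl hc, Finset.sum_add_distrib]
      simp only [Nat.choose_zero_right, Nat.cast_one, Nat.sub_zero]
      ring
    have harr : ∀ i ∈ range (m+1),
        (((m+n+1-i).choose (m+1-i) : ℝ) * ((n+1).choose i : ℝ)
          - ((m+n+1-i).choose (m+1-i) : ℝ) * (n.choose i : ℝ)) * T i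
        = (((m+n+1-i).choose (m+1-i) : ℝ) * ((n+1).choose i : ℝ)) * T i
          - (((m+n+1-i).choose (m+1-i) : ℝ) * ((n).choose i : ℝ)) * T i := by
      intro i _; ring
    rw [Finset.sum_congr rfl harr, Finset.sum_sub_distrib, hs1]
    -- remains: Σ_{i<m} E C T(i+1) + C(n+1,m+1)T(m+1) = C(n,m+1)T(m+1) + Σ_{i<m+1} E C T(i+1)
    rw [Finset.sum_range_succ (fun i => (((m+n-i).choose (m-i) : ℝ) * ((n).choose i : ℝ)) * T (i+1))]
    have e6 : m+n-m = n := by omega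
    have e7 : m-m = 0 := by omega
    rw [e6, e7, Nat.choose_succ_succ n m]
    simp only [Nat.choose_zero_right, Nat.cast_one, one_mul, Nat.succ_eq_add_one, Nat.cast_add]
    ring
  push_cast at key ⊢
  linarith [key]

/-- Basic expansion lemma. -/
lemma lemA (x y z c : ℝ) (h : x*y = z*(x+y+c)) :
    ∀ k : ℕ, x^(k+1) * y
      = (∑ a ∈ range (k+1), z^(a+1) * x^(k-a) * (x+c)) + z^(k+1) * y := by
  intro k
  induction k with
  | zero =>
    simp only [zero_add, pow_one, Finset.sum_range_one, Nat.sub_zero, pow_zero, mul_one, one_mul]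
    rw [h]; ring
  | succ k ih =>
    have step : x^(k+2) * y = x * (x^(k+1) * y) := by ring
    rw [step, ih]
    rw [mul_add, Finset.mul_sum]
    have hcong : ∀ a ∈ range (k+1),
        x * (z^(a+1) * x^(k-a) * (x+c)) = z^(a+1) * x^(k+1-a) * (x+c) := by
      intro a ha
      have ha' : a ≤ k := by have := Finset.mem_range.mp ha; omega
      have e : k+1-a = (k-a)+1 := by omega
      rw [e, pow_succ]
      ring
    rw [Finset.sum_congr rfl hcong]
    have hz : x * (z^(k+1) * y) = z^(k+1) * (x*y) := by ring
    rw [hz, h]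
    conv_rhs => rw [Finset.sum_range_succ]
    have e8 : k+1-(k+1) = 0 := by omega
    rw [e8]
    ring


noncomputable def S1f (x z c : ℝ) (m n : ℕ) : ℝ :=
  ∑ a ∈ range (m+1), ∑ b ∈ range (m+1-a),
    ((a+n).choose a * n.choose b : ℝ) * c^b * z^(n+1+a) * (x^(m-a-b) * (x+c))

noncomputable def S3f (z c : ℝ) (m n : ℕ) : ℝ :=
  ∑ i ∈ range (m+1), ((m+n-i).choose (m-i) * n.choose i : ℝ) * c^(i+1) * z^(m+n+1-i)

lemma S1rec (x z c : ℝ) (m n : ℕ) :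
    S1f x z c (m+1) (n+1)
      = z * S1f x z c (m+1) n + z * S1f x z c m (n+1) + c * z * S1f x z c m n := by
  have key := tri m n (fun a b => c^b * z^(n+2+a) * (x^(m+1-a-b) * (x+c)))
  have e1 : S1f x z c (m+1) (n+1)
      = ∑ a ∈ range (m+2), ∑ b ∈ range (m+2-a),
          ((a+n+1).choose a * (n+1).choose b : ℝ)
            * (fun a b => c^b * z^(n+2+a) * (x^(m+1-a-b) * (x+c))) a b := by
    unfold S1f
    apply Finset.sum_congr rfl; intro a _
    apply Finset.sum_congr rfl; intro b _
    have h1 : a + (n+1) = a+n+1 := by omega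
    rw [h1]
    ring
  have e2 : z * S1f x z c (m+1) n
      = ∑ a ∈ range (m+2), ∑ b ∈ range (m+2-a),
          ((a+n).choose a * n.choose b : ℝ)
            * (fun a b => c^b * z^(n+2+a) * (x^(m+1-a-b) * (x+c))) a b := by
    unfold S1f
    rw [Finset.mul_sum]
    apply Finset.sum_congr rfl; intro a _
    rw [Finset.mul_sum]
    apply Finset.sum_congr rfl; intro b _
    ring
  have e3 : z * S1f x z c m (n+1)
      = ∑ a ∈ range (m+1), ∑ b ∈ range (m+1-a),
          ((a+n+1).choose a * (n+1).choose b : ℝ)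
            * (fun a b => c^b * z^(n+2+a) * (x^(m+1-a-b) * (x+c))) (a+1) b := by
    unfold S1f
    rw [Finset.mul_sum]
    apply Finset.sum_congr rfl; intro a _
    rw [Finset.mul_sum]
    apply Finset.sum_congr rfl; intro b _
    have h1 : a + (n+1) = a+n+1 := by omega
    have h2 : m+1-(a+1)-b = m-a-b := by omega
    simp only [h1, h2]
    ring
  have e4 : c * z * S1f x z c m n
      = ∑ a ∈ range (m+1), ∑ b ∈ range (m+1-a),
          ((a+n).choose a * n.choose b : ℝ)
            * (fun a b => c^b * z^(n+2+a) * (x^(m+1-a-b) * (x+c))) a (b+1) := by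
    unfold S1f
    rw [Finset.mul_sum]
    apply Finset.sum_congr rfl; intro a _
    rw [Finset.mul_sum]
    apply Finset.sum_congr rfl; intro b _
    have h2 : m+1-a-(b+1) = m-a-b := by omega
    simp only [h2]
    ring
  rw [e1, e2, e3, e4, key]

lemma S3rec' (z c : ℝ) (m n : ℕ) :
    S3f z c (m+1) (n+1)
      = z * S3f z c (m+1) n + z * S3f z c m (n+1) + c * z * S3f z c m n := by
  have key := s3rec m n (fun i => c^(i+1) * z^(m+n+3-i))
  have e1 : S3f z c (m+1) (n+1)
      = ∑ i ∈ range (m+2), ((m+n+2-i).choose (m+1-i) * (n+1).choose i : ℝ)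
          * (fun i => c^(i+1) * z^(m+n+3-i)) i := by
    unfold S3f
    apply Finset.sum_congr rfl; intro i hi
    have h1 : m+1+(n+1)-i = m+n+2-i := by omega
    have h2 : m+1+(n+1)+1-i = m+n+3-i := by omega
    simp only [h1, h2]
    ring
  have e2 : z * S3f z c (m+1) n
      = ∑ i ∈ range (m+2), ((m+n+1-i).choose (m+1-i) * n.choose i : ℝ)
          * (fun i => c^(i+1) * z^(m+n+3-i)) i := by
    unfold S3f
    rw [Finset.mul_sum]
    apply Finset.sum_congr rfl; intro i hi
    have hi' : i ≤ m+1 := by have := Finset.mem_range.mp hi; omega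
    have h1 : m+1+n-i = m+n+1-i := by omega
    have h2 : m+n+3-i = (m+1+n+1-i)+1 := by omega
    simp only [h1, h2, pow_succ]
    ring
  have e3 : z * S3f z c m (n+1)
      = ∑ i ∈ range (m+1), ((m+n+1-i).choose (m-i) * (n+1).choose i : ℝ)
          * (fun i => c^(i+1) * z^(m+n+3-i)) i := by
    unfold S3f
    rw [Finset.mul_sum]
    apply Finset.sum_congr rfl; intro i hi
    have hi' : i ≤ m := by have := Finset.mem_range.mp hi; omega
    have h1 : m+(n+1)-i = m+n+1-i := by omega
    have h2 : m+n+3-i = (m+(n+1)+1-i)+1 := by omega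
    simp only [h1, h2, pow_succ]
    ring
  have e4 : c * z * S3f z c m n
      = ∑ i ∈ range (m+1), ((m+n-i).choose (m-i) * n.choose i : ℝ)
          * (fun i => c^(i+1) * z^(m+n+3-i)) (i+1) := by
    unfold S3f
    rw [Finset.mul_sum]
    apply Finset.sum_congr rfl; intro i hi
    have hi' : i ≤ m := by have := Finset.mem_range.mp hi; omega
    have h2 : m+n+3-(i+1) = (m+n+1-i)+1 := by omega
    simp only [h2, pow_succ]
    ring
  rw [e1, e2, e3, e4, key]

lemma collapse0 (K : ℕ) (hK : 0 < K) (g : ℕ → ℝ) :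
    ∑ b ∈ range K, ((0:ℕ).choose b : ℝ) * g b = g 0 := by
  rw [Finset.sum_eq_single_of_mem 0 (Finset.mem_range.mpr hK)]
  · simp
  · intro b _ hb
    have : (0:ℕ).choose b = 0 := Nat.choose_eq_zero_of_lt (Nat.pos_of_ne_zero hb)
    rw [this]; simp

lemma starM0 (x y z c : ℝ) (h : x*y = z*(x+y+c)) (m : ℕ) :
    x^(m+1) * y^(0+1) = S1f x z c m 0 + S1f y z c 0 m - S3f z c m 0 := by
  have hA := lemA x y z c h m
  have e1 : S1f x z c m 0 = ∑ a ∈ range (m+1), z^(a+1) * x^(m-a) * (x+c) := by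
    unfold S1f
    apply Finset.sum_congr rfl; intro a ha
    have ha' : a ≤ m := by have := Finset.mem_range.mp ha; omega
    rw [Finset.sum_eq_single_of_mem 0 (Finset.mem_range.mpr (by omega))]
    · simp [Nat.choose_self]; ring
    · intro b _ hb
      simp [Nat.choose_eq_zero_of_lt (Nat.pos_of_ne_zero hb)]
  have e2 : S1f y z c 0 m = z^(m+1) * (y+c) := by
    unfold S1f
    simp [Nat.choose_self]
  have e3 : S3f z c m 0 = c * z^(m+1) := by
    unfold S3f
    rw [Finset.sum_eq_single_of_mem 0 (Finset.mem_range.mpr (by omega))]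
    · simp
    · intro i _ hi
      have : (0:ℕ).choose i = 0 := Nat.choose_eq_zero_of_lt (Nat.pos_of_ne_zero hi)
      rw [this]; simp
  rw [e1, e2, e3, pow_one, hA]
  ring

lemma star0N (x y z c : ℝ) (h : x*y = z*(x+y+c)) (n : ℕ) :
    x^(0+1) * y^(n+1) = S1f x z c 0 n + S1f y z c n 0 - S3f z c 0 n := by
  have h' : y*x = z*(y+x+c) := by rw [mul_comm y x, h]; ring
  have hA := lemA y x z c h' n
  have e1 : S1f y z c n 0 = ∑ a ∈ range (n+1), z^(a+1) * y^(n-a) * (y+c) := by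
    unfold S1f
    apply Finset.sum_congr rfl; intro a ha
    have ha' : a ≤ n := by have := Finset.mem_range.mp ha; omega
    rw [Finset.sum_eq_single_of_mem 0 (Finset.mem_range.mpr (by omega))]
    · simp [Nat.choose_self]; ring
    · intro b _ hb
      simp [Nat.choose_eq_zero_of_lt (Nat.pos_of_ne_zero hb)]
  have e2 : S1f x z c 0 n = z^(n+1) * (x+c) := by
    unfold S1f
    simp [Nat.choose_self]
  have e3 : S3f z c 0 n = c * z^(n+1) := by
    unfold S3f
    simp
  rw [e1, e2, e3, pow_one]
  nlinarith [hA]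

lemma star (x y z c : ℝ) (h : x*y = z*(x+y+c)) :
    ∀ m n : ℕ, x^(m+1) * y^(n+1) = S1f x z c m n + S1f y z c n m - S3f z c m n := by
  intro m
  induction m with
  | zero => exact fun n => star0N x y z c h n
  | succ m ihm =>
    intro n
    induction n with
    | zero => exact starM0 x y z c h (m+1)
    | succ n ihn =>
      have expand : x^(m+1+1) * y^(n+1+1)
          = z * (x^(m+1+1) * y^(n+1)) + z * (x^(m+1) * y^(n+1+1))
            + c * z * (x^(m+1) * y^(n+1)) := by
        have e : x^(m+1+1) * y^(n+1+1) = (x^(m+1) * y^(n+1)) * (x*y) := by ring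
        rw [e, h]
        ring
      rw [expand, ihn, ihm (n+1), ihm n]
      rw [S1rec x z c m n, S3rec' z c m n]
      have hS2 : S1f y z c (n+1) (m+1)
          = z * S1f y z c (n+1) m + z * S1f y z c n (m+1) + c * z * S1f y z c n m :=
        S1rec y z c n m
      rw [hS2]
      ring

noncomputable def gg (q : ℝ) (k : ℕ) : ℝ := q ^ k / qa q k

noncomputable def Fq (q A : ℝ) (k : ℕ) : ℝ := q ^ ((A-1)*((k:ℝ)+1)) / qa q (k+1) ^ A

lemma hq0 {q : ℝ} (hq : 1 < q) : (0:ℝ) < q := lt_trans one_pos hq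

lemma qa_pos {q : ℝ} (hq : 1 < q) (k : ℕ) : 0 < qa q (k+1) := by
  unfold qa
  apply div_pos
  · have : 1 < q ^ (k+1) := one_lt_pow₀ hq (by omega)
    linarith
  · linarith

lemma qa_lb {q : ℝ} (hq : 1 < q) (k : ℕ) : q ^ k ≤ qa q (k+1) := by
  unfold qa
  rw [le_div_iff₀ (by linarith)]
  have h1 : (1:ℝ) ≤ q ^ k := one_le_pow₀ hq.le
  have : q ^ (k+1) = q ^ k * q := by ring
  nlinarith

lemma qa_ub {q : ℝ} (hq : 1 < q) (k : ℕ) : qa q (k+1) ≤ q ^ (k+1) / (q-1) := by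
  unfold qa
  apply div_le_div_of_nonneg_right ?_ (by linarith)
  · linarith

lemma gg_pos {q : ℝ} (hq : 1 < q) (k : ℕ) : 0 < gg q (k+1) := by
  unfold gg
  exact div_pos (pow_pos (hq0 hq) _) (qa_pos hq k)

lemma gg_lb {q : ℝ} (hq : 1 < q) (k : ℕ) : q - 1 ≤ gg q (k+1) := by
  unfold gg
  rw [le_div_iff₀ (qa_pos hq k)]
  have h := qa_ub hq k
  have h2 : (q-1) * qa q (k+1) ≤ (q-1) * (q^(k+1)/(q-1)) :=
    mul_le_mul_of_nonneg_left h (by linarith)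
  have hne : q - 1 ≠ 0 := by intro h; nlinarith
  have h3 : (q-1) * (q^(k+1)/(q-1)) = q^(k+1) := by
    rw [mul_comm, div_mul_cancel₀ _ hne]
  linarith

lemma gg_ub {q : ℝ} (hq : 1 < q) (k : ℕ) : gg q (k+1) ≤ q := by
  unfold gg
  rw [div_le_iff₀ (qa_pos hq k)]
  have h := qa_lb hq k
  have e : q ^ (k+1) = q * q ^ k := by ring
  nlinarith [hq0 hq]

lemma qa_ne {q : ℝ} (hq : 1 < q) (k : ℕ) : qa q (k+1) ≠ 0 := ne_of_gt (qa_pos hq k)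

lemma inv_qa {q : ℝ} (hq : 1 < q) (k : ℕ) : (qa q (k+1))⁻¹ = gg q (k+1) + (1 - q) := by
  have hpos := qa_pos hq k
  have hq1 : q - 1 ≠ 0 := by intro h; nlinarith
  have hA : q ^ (k+1) - 1 ≠ 0 := by
    have : 1 < q ^ (k+1) := one_lt_pow₀ hq (by omega)
    intro h; nlinarith
  unfold gg qa
  unfold qa at hpos
  field_simp
  ring

lemma rel_core (c a b : ℝ) (hc : c ≠ 0) (ha : a - 1 ≠ 0) (hb : b - 1 ≠ 0)
    (hab : a*b - 1 ≠ 0) :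
    (a*c/(a-1)) * (b*c/(b-1))
      = (a*b*c/(a*b-1)) * (a*c/(a-1) + b*c/(b-1) + (-c)) := by
  field_simp
  ring

lemma gg_form {q : ℝ} (hq : 1 < q) (k : ℕ) : gg q (k+1) = q^(k+1) * (q-1) / (q^(k+1) - 1) := by
  unfold gg qa
  rw [div_div_eq_mul_div]

lemma rel {q : ℝ} (hq : 1 < q) (i j : ℕ) :
    gg q (i+1) * gg q (j+1) = gg q (i+j+2) * (gg q (i+1) + gg q (j+1) + (1-q)) := by
  have hq1 : q - 1 ≠ 0 := by intro h; nlinarith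
  have hA : q ^ (i+1) - 1 ≠ 0 := by
    have : 1 < q ^ (i+1) := one_lt_pow₀ hq (by omega)
    intro h; nlinarith
  have hB : q ^ (j+1) - 1 ≠ 0 := by
    have : 1 < q ^ (j+1) := one_lt_pow₀ hq (by omega)
    intro h; nlinarith
  have hC : q ^ (i+j+2) - 1 ≠ 0 := by
    have : 1 < q ^ (i+j+2) := one_lt_pow₀ hq (by omega)
    intro h; nlinarith
  have hpow : q ^ (i+j+2) = q ^ (i+1) * q ^ (j+1) := by
    rw [← pow_add]; congr 1; omega
  have hC' : q ^ (i+1) * q ^ (j+1) - 1 ≠ 0 := by rw [← hpow]; exact hC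
  rw [gg_form hq, gg_form hq, show (i:ℕ)+j+2 = (i+j+1)+1 from by omega, gg_form hq]
  rw [show (i:ℕ)+j+1+1 = i+j+2 from by omega, hpow]
  have := rel_core (q-1) (q^(i+1)) (q^(j+1)) hq1 hA hB hC'
  rw [show (1:ℝ) - q = -(q-1) from by ring]
  exact this


lemma Fq_eq {q : ℝ} (hq : 1 < q) (A : ℝ) (k : ℕ) :
    Fq q A k = gg q (k+1) ^ A * ((q ^ (k+1) : ℝ))⁻¹ := by
  have h0 := hq0 hq
  have hqa := qa_pos hq k
  have hp : (0:ℝ) < q ^ (k+1) := pow_pos h0 _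
  unfold Fq gg
  rw [Real.div_rpow (le_of_lt hp) (le_of_lt hqa)]
  rw [← Real.rpow_natCast q (k+1)]
  rw [← Real.rpow_mul (le_of_lt h0)]
  rw [← Real.rpow_neg (le_of_lt h0)]
  rw [div_mul_eq_mul_div, ← Real.rpow_add h0]
  congr 1
  push_cast
  ring

lemma Fq_pos {q : ℝ} (hq : 1 < q) (A : ℝ) (k : ℕ) : 0 < Fq q A k := by
  unfold Fq
  apply div_pos (Real.rpow_pos_of_pos (hq0 hq) _) (Real.rpow_pos_of_pos (qa_pos hq k) _)

noncomputable def KA (q A : ℝ) : ℝ := max ((q-1) ^ A) (q ^ A)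

lemma KA_pos {q : ℝ} (hq : 1 < q) (A : ℝ) : 0 < KA q A :=
  lt_max_of_lt_right (Real.rpow_pos_of_pos (hq0 hq) _)

lemma gg_rpow_le {q : ℝ} (hq : 1 < q) (A : ℝ) (k : ℕ) : gg q (k+1) ^ A ≤ KA q A := by
  rcases le_or_gt 0 A with hA | hA
  · exact le_max_of_le_right
      (Real.rpow_le_rpow (le_of_lt (gg_pos hq k)) (gg_ub hq k) hA)
  · exact le_max_of_le_left
      (Real.rpow_le_rpow_of_nonpos (by linarith [hq] : (0:ℝ) < q - 1) (gg_lb hq k) (le_of_lt hA))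

lemma Fq_le {q : ℝ} (hq : 1 < q) (A : ℝ) (k : ℕ) :
    Fq q A k ≤ KA q A * (q⁻¹) ^ (k+1) := by
  rw [Fq_eq hq A k, ← inv_pow]
  exact mul_le_mul_of_nonneg_right (gg_rpow_le hq A k) (by positivity)

lemma qinv_lt_one {q : ℝ} (hq : 1 < q) : q⁻¹ < 1 := by
  rw [inv_lt_one_iff₀]; right; exact hq

lemma qinv_nonneg {q : ℝ} (hq : 1 < q) : (0:ℝ) ≤ q⁻¹ := by
  have := hq0 hq; positivity

lemma sum_geo {q : ℝ} (hq : 1 < q) : Summable (fun k : ℕ => (q⁻¹) ^ k) :=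
  summable_geometric_of_lt_one (qinv_nonneg hq) (qinv_lt_one hq)

lemma qinv_pow_le {q : ℝ} (hq : 1 < q) {a b : ℕ} (h : a ≤ b) : (q⁻¹:ℝ) ^ b ≤ (q⁻¹) ^ a :=
  pow_le_pow_of_le_one (qinv_nonneg hq) (le_of_lt (qinv_lt_one hq)) h

lemma master {q : ℝ} (hq : 1 < q) (f : ℕ × ℕ → ℝ) (C : ℝ)
    (h0 : ∀ p, 0 ≤ f p) (hb : ∀ p, f p ≤ C * ((q⁻¹) ^ p.1 * (q⁻¹) ^ p.2)) :
    Summable f ∧ ∀ u, Summable (fun v => f (u, v)) := by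
  have hgeo : Summable (fun p : ℕ × ℕ => (q⁻¹:ℝ) ^ p.1 * (q⁻¹) ^ p.2) :=
    Summable.mul_of_nonneg (sum_geo hq) (sum_geo hq)
      (fun k => by have := qinv_nonneg hq; positivity)
      (fun k => by have := qinv_nonneg hq; positivity)
  constructor
  · exact Summable.of_nonneg_of_le h0 hb (hgeo.mul_left C)
  · intro u
    apply Summable.of_nonneg_of_le (fun v => h0 (u,v)) (fun v => hb (u,v))
    have hs : Summable (fun v : ℕ => (C * (q⁻¹)^u) * (q⁻¹)^v) := (sum_geo hq).mul_left _
    apply hs.congr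
    intro v
    ring

noncomputable def Zt (q p : ℝ) (w : ℕ) (i j : ℕ) : ℝ :=
  q ^ ((p - 1) * ((i : ℝ) + (j : ℝ) + 2) + ((w : ℝ) - 1) * ((j : ℝ) + 1)) /
    (qa q (i + j + 2) ^ p * qa q (j + 1) ^ w)

noncomputable def Lt (q : ℝ) (r s : ℕ) (t : ℝ) (i j : ℕ) : ℝ :=
  q ^ (((r : ℝ) + t - 1) * ((i : ℝ) + 1) + ((s : ℝ) + t - 1) * ((j : ℝ) + 1)) /
    (qa q (i + 1) ^ r * qa q (j + 1) ^ s * qa q (i + j + 2) ^ t)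

lemma Zt_eq {q : ℝ} (hq : 1 < q) (p : ℝ) (w : ℕ) (i j : ℕ) :
    Zt q p w i j = Fq q p (i+j+1) * Fq q (w:ℝ) j := by
  have h0 := hq0 hq
  unfold Zt Fq
  rw [Real.rpow_natCast (qa q (j+1)) w]
  rw [div_mul_div_comm, ← Real.rpow_add h0]
  have e1 : ((i+j+1:ℕ):ℝ) + 1 = (i:ℝ) + (j:ℝ) + 2 := by push_cast; ring
  rw [e1]

lemma Lt_eq {q : ℝ} (hq : 1 < q) (r s : ℕ) (t : ℝ) (i j : ℕ) :
    Lt q r s t i j = Fq q (r:ℝ) i * Fq q (s:ℝ) j * gg q (i+j+2) ^ t := by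
  have h0 := hq0 hq
  have hqa3 : (0:ℝ) < qa q (i+j+2) := qa_pos hq (i+j+1)
  unfold Lt Fq gg
  rw [Real.div_rpow (pow_nonneg h0.le _) hqa3.le]
  rw [← Real.rpow_natCast q (i+j+2), ← Real.rpow_mul h0.le]
  rw [Real.rpow_natCast (qa q (i+1)) r, Real.rpow_natCast (qa q (j+1)) s]
  rw [div_mul_div_comm, div_mul_div_comm, ← Real.rpow_add h0, ← Real.rpow_add h0]
  congr 1
  push_cast
  ring

lemma Zt_pos {q : ℝ} (hq : 1 < q) (p : ℝ) (w : ℕ) (i j : ℕ) : 0 < Zt q p w i j := by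
  rw [Zt_eq hq]; exact mul_pos (Fq_pos hq _ _) (Fq_pos hq _ _)

lemma Lt_pos {q : ℝ} (hq : 1 < q) (r s : ℕ) (t : ℝ) (i j : ℕ) : 0 < Lt q r s t i j := by
  rw [Lt_eq hq]
  exact mul_pos (mul_pos (Fq_pos hq _ _) (Fq_pos hq _ _))
    (Real.rpow_pos_of_pos (gg_pos hq _) _)

lemma two_pow_split {q : ℝ} (hq : 1 < q) (i j : ℕ) :
    (q⁻¹:ℝ) ^ (i+j+2) * (q⁻¹) ^ (j+1) ≤ (q⁻¹) ^ i * (q⁻¹) ^ j := by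
  have h1 : (q⁻¹:ℝ) ^ (i+j+2) ≤ (q⁻¹) ^ (i+j) := qinv_pow_le hq (by omega)
  have h2 : (q⁻¹:ℝ) ^ (j+1) ≤ 1 := by
    calc (q⁻¹:ℝ) ^ (j+1) ≤ (q⁻¹) ^ 0 := qinv_pow_le hq (by omega)
    _ = 1 := pow_zero _
  have h3 : (0:ℝ) ≤ (q⁻¹) ^ (i+j+2) := by have := qinv_nonneg hq; positivity
  calc (q⁻¹:ℝ) ^ (i+j+2) * (q⁻¹) ^ (j+1) ≤ (q⁻¹) ^ (i+j+2) * 1 :=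
        mul_le_mul_of_nonneg_left h2 h3
    _ = (q⁻¹) ^ (i+j+2) := mul_one _
    _ ≤ (q⁻¹) ^ (i+j) := h1
    _ = (q⁻¹) ^ i * (q⁻¹) ^ j := by rw [← pow_add]

lemma sumZ {q : ℝ} (hq : 1 < q) (p : ℝ) (w : ℕ) :
    Summable (fun x : ℕ × ℕ => Zt q p w x.1 x.2) ∧
      ∀ u, Summable (fun v => Zt q p w u v) := by
  apply master hq _ (KA q p * KA q (w:ℝ))
  · exact fun x => (Zt_pos hq p w x.1 x.2).le
  · rintro ⟨i, j⟩
    rw [Zt_eq hq]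
    have h1 := Fq_le hq p (i+j+1)
    have h2 := Fq_le hq (w:ℝ) j
    have hC1 := KA_pos hq p
    have hC2 := KA_pos hq (w:ℝ)
    have hF1 := Fq_pos hq p (i+j+1)
    have hF2 := Fq_pos hq (w:ℝ) j
    have e2 : (i+j+1)+1 = i+j+2 := rfl
    rw [e2] at h1
    calc Fq q p (i+j+1) * Fq q (w:ℝ) j
        ≤ (KA q p * (q⁻¹)^(i+j+2)) * (KA q (w:ℝ) * (q⁻¹)^(j+1)) := by
          apply mul_le_mul h1 h2 hF2.le
          positivity
      _ = (KA q p * KA q (w:ℝ)) * ((q⁻¹)^(i+j+2) * (q⁻¹)^(j+1)) := by ring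
      _ ≤ (KA q p * KA q (w:ℝ)) * ((q⁻¹)^i * (q⁻¹)^j) := by
          apply mul_le_mul_of_nonneg_left (two_pow_split hq i j)
          positivity

lemma sumL {q : ℝ} (hq : 1 < q) (r s : ℕ) (t : ℝ) :
    Summable (fun x : ℕ × ℕ => Lt q r s t x.1 x.2) ∧
      ∀ u, Summable (fun v => Lt q r s t u v) := by
  apply master hq _ (KA q r * KA q s * KA q t)
  · exact fun x => (Lt_pos hq r s t x.1 x.2).le
  · rintro ⟨i, j⟩
    rw [Lt_eq hq]
    have h1 := Fq_le hq (r:ℝ) i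
    have h2 := Fq_le hq (s:ℝ) j
    have h3 := gg_rpow_le hq t (i+j+1)
    have e2 : (i+j+1)+1 = i+j+2 := rfl
    rw [e2] at h3
    have hC1 := KA_pos hq (r:ℝ)
    have hC2 := KA_pos hq (s:ℝ)
    have hC3 := KA_pos hq t
    have hF1 := Fq_pos hq (r:ℝ) i
    have hF2 := Fq_pos hq (s:ℝ) j
    have hG := Real.rpow_pos_of_pos (gg_pos hq (i+j+1)) t
    rw [e2] at hG
    have step1 : Fq q (r:ℝ) i * Fq q (s:ℝ) j * gg q (i+j+2) ^ t
        ≤ (KA q (r:ℝ) * (q⁻¹)^(i+1)) * (KA q (s:ℝ) * (q⁻¹)^(j+1)) * KA q t := by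
      refine mul_le_mul ?_ h3 hG.le ?_
      · exact mul_le_mul h1 h2 hF2.le (by positivity)
      · positivity
    have step2 : (KA q (r:ℝ) * (q⁻¹)^(i+1)) * (KA q (s:ℝ) * (q⁻¹)^(j+1)) * KA q t
        ≤ (KA q (r:ℝ) * KA q (s:ℝ) * KA q t) * ((q⁻¹)^i * (q⁻¹)^j) := by
      have g1 : (q⁻¹:ℝ)^(i+1) ≤ (q⁻¹)^i := qinv_pow_le hq (by omega)
      have g2 : (q⁻¹:ℝ)^(j+1) ≤ (q⁻¹)^j := qinv_pow_le hq (by omega)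
      have hge : (q⁻¹:ℝ)^(i+1) * (q⁻¹)^(j+1) ≤ (q⁻¹)^i * (q⁻¹)^j := by
        apply mul_le_mul g1 g2 _ _
        · have := qinv_nonneg hq; positivity
        · have := qinv_nonneg hq; positivity
      calc (KA q (r:ℝ) * (q⁻¹)^(i+1)) * (KA q (s:ℝ) * (q⁻¹)^(j+1)) * KA q t
          = (KA q (r:ℝ) * KA q (s:ℝ) * KA q t) * ((q⁻¹)^(i+1) * (q⁻¹)^(j+1)) := by ring
        _ ≤ (KA q (r:ℝ) * KA q (s:ℝ) * KA q t) * ((q⁻¹)^i * (q⁻¹)^j) := by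
            apply mul_le_mul_of_nonneg_left hge
            positivity
    exact le_trans step1 step2

lemma sumK {q : ℝ} (hq : 1 < q) (W : ℝ) :
    Summable (fun x : ℕ × ℕ => Fq q W (x.1+x.2+1)) := by
  have h := master hq (fun x : ℕ × ℕ => Fq q W (x.1+x.2+1)) (KA q W) ?_ ?_
  · exact h.1
  · exact fun x => (Fq_pos hq W _).le
  · rintro ⟨i, j⟩
    have h1 := Fq_le hq W (i+j+1)
    have e2 : (i+j+1)+1 = i+j+2 := rfl
    rw [e2] at h1
    calc Fq q W (i+j+1) ≤ KA q W * (q⁻¹)^(i+j+2) := h1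
      _ ≤ KA q W * ((q⁻¹)^i * (q⁻¹)^j) := by
          apply mul_le_mul_of_nonneg_left _ (KA_pos hq W).le
          calc (q⁻¹:ℝ)^(i+j+2) ≤ (q⁻¹)^(i+j) := qinv_pow_le hq (by omega)
            _ = (q⁻¹)^i * (q⁻¹)^j := by rw [← pow_add]

def fibEquiv (d : ℕ) : {p : ℕ × ℕ // p.1 + p.2 = d} ≃ Fin (d+1) where
  toFun p := ⟨p.1.1, by have := p.2; omega⟩
  invFun k := ⟨(k.1, d - k.1), by have := k.2; omega⟩
  left_inv := by
    rintro ⟨⟨a, b⟩, hp⟩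
    simp only at hp
    apply Subtype.ext
    simp only
    have : d - a = b := by omega
    rw [this]
  right_inv := by
    rintro ⟨k, hk⟩
    rfl

lemma diag (H : ℕ → ℝ) (hs : Summable (fun p : ℕ × ℕ => H (p.1 + p.2))) :
    ∑' p : ℕ × ℕ, H (p.1 + p.2) = ∑' d : ℕ, ((d:ℝ) + 1) * H d := by
  classical
  haveI : ∀ d, Fintype {p : ℕ × ℕ // p.1 + p.2 = d} :=
    fun d => Fintype.ofEquiv _ (fibEquiv d).symm
  have h1 : ∑' x : Σ d : ℕ, {p : ℕ × ℕ // p.1 + p.2 = d}, H x.1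
      = ∑' p : ℕ × ℕ, H (p.1 + p.2) := by
    rw [← (Equiv.sigmaFiberEquiv (fun p : ℕ × ℕ => p.1 + p.2)).tsum_eq
      (fun p : ℕ × ℕ => H (p.1 + p.2))]
    apply tsum_congr
    rintro ⟨d, ⟨p, hp⟩⟩
    simp only [Equiv.sigmaFiberEquiv, Equiv.coe_fn_mk]
    rw [hp]
  have hsig : Summable (fun x : Σ d : ℕ, {p : ℕ × ℕ // p.1 + p.2 = d} => H x.1) := by
    have h2 := ((Equiv.sigmaFiberEquiv (fun p : ℕ × ℕ => p.1 + p.2)).summable_iff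
      (f := fun p : ℕ × ℕ => H (p.1 + p.2))).mpr hs
    apply h2.congr
    rintro ⟨d, ⟨p, hp⟩⟩
    simp only [Function.comp, Equiv.sigmaFiberEquiv, Equiv.coe_fn_mk]
    rw [hp]
  rw [← h1, Summable.tsum_sigma hsig]
  apply tsum_congr
  intro d
  have inner : ∑' _c : {p : ℕ × ℕ // p.1 + p.2 = d}, H d = ((d:ℝ) + 1) * H d := by
    rw [tsum_fintype]
    rw [Finset.sum_const, Finset.card_univ]
    have hcard : Fintype.card {p : ℕ × ℕ // p.1 + p.2 = d} = d+1 := by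
      rw [Fintype.card_congr (fibEquiv d), Fintype.card_fin]
    rw [hcard, nsmul_eq_mul]
    push_cast
    ring
  exact inner

lemma sumPhiAux {q : ℝ} (hq : 1 < q) (W : ℝ) :
    Summable (fun n : ℕ => (n:ℝ) * Fq q W n) := by
  have hbase : Summable (fun n : ℕ => (n:ℝ) ^ 1 * (q⁻¹) ^ n) := by
    apply summable_pow_mul_geometric_of_norm_lt_one
    rw [Real.norm_eq_abs, abs_of_nonneg (qinv_nonneg hq)]
    exact qinv_lt_one hq
  apply Summable.of_nonneg_of_le
    (fun n => by have := Fq_pos hq W n; positivity)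
    (fun n => ?_) (hbase.mul_left (KA q W))
  have h1 := Fq_le hq W n
  have h2 : (q⁻¹:ℝ) ^ (n+1) ≤ (q⁻¹) ^ n := qinv_pow_le hq (by omega)
  have hK := KA_pos hq W
  calc (n:ℝ) * Fq q W n ≤ (n:ℝ) * (KA q W * (q⁻¹)^(n+1)) := by
        apply mul_le_mul_of_nonneg_left h1 (Nat.cast_nonneg n)
    _ ≤ (n:ℝ) * (KA q W * (q⁻¹)^n) := by
        apply mul_le_mul_of_nonneg_left _ (Nat.cast_nonneg n)
        apply mul_le_mul_of_nonneg_left h2 hK.le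
    _ = KA q W * ((n:ℝ)^1 * (q⁻¹)^n) := by ring

lemma qphi_repr {q : ℝ} (hq : 1 < q) (W : ℝ) :
    ∑' p : ℕ × ℕ, Fq q W (p.1 + p.2 + 1)
      = ∑' n : ℕ, (n:ℝ) * q ^ ((W - 1) * ((n:ℝ) + 1)) / qa q (n + 1) ^ W := by
  have hfq : ∀ n : ℕ, (n:ℝ) * q ^ ((W - 1) * ((n:ℝ) + 1)) / qa q (n + 1) ^ W
      = (n:ℝ) * Fq q W n := by
    intro n; unfold Fq; rw [mul_div_assoc]
  rw [tsum_congr hfq]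
  rw [diag (fun d => Fq q W (d+1)) (sumK hq W)]
  rw [Summable.tsum_eq_zero_add (sumPhiAux hq W)]
  simp only [Nat.cast_zero, zero_mul, zero_add]
  apply tsum_congr
  intro d
  push_cast
  ring

lemma gg_mul_inv {q : ℝ} (hq : 1 < q) (k : ℕ) :
    gg q (k+1) * ((q:ℝ)^(k+1))⁻¹ = (qa q (k+1))⁻¹ := by
  have hp : (q:ℝ)^(k+1) ≠ 0 := by have := hq0 hq; positivity
  have hqa := qa_ne hq k
  unfold gg
  field_simp

lemma Zpt {q : ℝ} (hq : 1 < q) (t : ℝ) (σ a w' i j : ℕ) :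
    Fq q ((σ:ℝ) + t + (a:ℝ)) (i+j+1) * Fq q (((w'+1:ℕ)):ℝ) j
      = (gg q (i+j+2) ^ t * ((q:ℝ) ^ (i+j+2))⁻¹)
        * (gg q (i+j+2) ^ (σ+a) * (gg q (j+1) ^ w' * (gg q (j+1) + (1-q)))) := by
  have hgn : 0 < gg q (i+j+2) := gg_pos hq (i+j+1)
  have step1 : Fq q ((σ:ℝ)+t+(a:ℝ)) (i+j+1)
      = gg q (i+j+2)^t * gg q (i+j+2)^(σ+a) * ((q:ℝ)^(i+j+2))⁻¹ := by
    rw [Fq_eq hq]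
    rw [show (σ:ℝ)+t+(a:ℝ) = t + ((σ+a:ℕ):ℝ) from by push_cast; ring]
    rw [Real.rpow_add hgn, Real.rpow_natCast]
  have step2 : Fq q (((w'+1:ℕ)):ℝ) j = gg q (j+1)^w' * (gg q (j+1) + (1-q)) := by
    rw [Fq_eq hq, Real.rpow_natCast, pow_succ]
    rw [mul_assoc, gg_mul_inv hq j, inv_qa hq j]
  rw [step1, step2]
  ring

lemma Kpt {q : ℝ} (hq : 1 < q) (t : ℝ) (m n k i j : ℕ) (hk : k ≤ m) :
    Fq q (((m+1:ℕ):ℝ) + ((n+1:ℕ):ℝ) + t - ((k+1:ℕ):ℝ)) (i+j+1)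
      = (gg q (i+j+2) ^ t * ((q:ℝ)^(i+j+2))⁻¹) * gg q (i+j+2) ^ (m+n+1-k) := by
  have hgn : 0 < gg q (i+j+2) := gg_pos hq (i+j+1)
  rw [Fq_eq hq]
  rw [show ((m+1:ℕ):ℝ) + ((n+1:ℕ):ℝ) + t - ((k+1:ℕ):ℝ) = t + ((m+n+1-k:ℕ):ℝ) from by
    rw [Nat.cast_sub (by omega)]
    push_cast
    ring]
  rw [Real.rpow_add hgn, Real.rpow_natCast]
  ring

lemma Lpt {q : ℝ} (hq : 1 < q) (r s : ℕ) (t : ℝ) (i j : ℕ) :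
    Lt q r s t i j
      = (gg q (i+j+2) ^ t * ((q:ℝ)^(i+j+2))⁻¹) * (gg q (i+1)^r * gg q (j+1)^s) := by
  rw [Lt_eq hq, Fq_eq hq, Fq_eq hq]
  rw [Real.rpow_natCast, Real.rpow_natCast]
  have e : ((q:ℝ)^(i+1))⁻¹ * ((q:ℝ)^(j+1))⁻¹ = ((q:ℝ)^(i+j+2))⁻¹ := by
    rw [← mul_inv, ← pow_add]
    congr 2
    omega
  rw [← e]
  ring

lemma icc_range (M : ℕ) (f : ℕ → ℝ) : ∑ j ∈ Finset.Icc 1 M, f j = ∑ k ∈ range M, f (k+1) := by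
  rw [← Finset.Ico_add_one_right_eq_Icc, Finset.sum_Ico_eq_sum_range]
  have e : M + 1 - 1 = M := by omega
  rw [e]
  apply Finset.sum_congr rfl
  intro k _
  rw [add_comm]

lemma pointwise {q : ℝ} (hq : 1 < q) (t : ℝ) (m n i j : ℕ) :
    (∑ a ∈ range (m+1), ∑ b ∈ range (m+1-a),
        ((a + (n+1) - 1).choose a : ℝ) * ((((n+1):ℕ) - 1).choose b : ℝ) * (1-q)^b
          * Zt q (((n+1:ℕ):ℝ) + t + (a:ℝ)) ((m+1) - a - b) j i)
    + (∑ a ∈ range (n+1), ∑ b ∈ range (n+1-a),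
        ((a + (m+1) - 1).choose a : ℝ) * ((((m+1):ℕ) - 1).choose b : ℝ) * (1-q)^b
          * Zt q (((m+1:ℕ):ℝ) + t + (a:ℝ)) ((n+1) - a - b) i j)
    - (∑ k ∈ range (m+1),
        ((m+n-k).choose (m-k) : ℝ) * (n.choose k : ℝ) * (1-q)^(k+1)
          * Fq q (((m+1:ℕ):ℝ) + ((n+1:ℕ):ℝ) + t - ((k+1:ℕ):ℝ)) (i+j+1))
    = Lt q (m+1) (n+1) t i j := by
  have hrel := rel hq i j
  have hstar := star (gg q (i+1)) (gg q (j+1)) (gg q (i+j+2)) (1-q) hrel m n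
  have e1 : (∑ a ∈ range (m+1), ∑ b ∈ range (m+1-a),
        ((a + (n+1) - 1).choose a : ℝ) * ((((n+1):ℕ) - 1).choose b : ℝ) * (1-q)^b
          * Zt q (((n+1:ℕ):ℝ) + t + (a:ℝ)) ((m+1) - a - b) j i)
      = (gg q (i+j+2) ^ t * ((q:ℝ)^(i+j+2))⁻¹)
          * S1f (gg q (i+1)) (gg q (i+j+2)) (1-q) m n := by
    unfold S1f
    rw [Finset.mul_sum]
    apply Finset.sum_congr rfl
    intro a ha
    rw [Finset.mul_sum]
    apply Finset.sum_congr rfl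
    intro b hb
    have ha' : a ≤ m := by have := Finset.mem_range.mp ha; omega
    have hb' : b ≤ m - a := by have := Finset.mem_range.mp hb; omega
    have ew : (m+1) - a - b = (m-a-b)+1 := by omega
    have ec1 : a + (n+1) - 1 = a + n := by omega
    have ec2 : ((n+1):ℕ) - 1 = n := by omega
    rw [ew, ec1, ec2, Zt_eq hq _ _ j i]
    rw [Zpt hq t (n+1) a (m-a-b) j i]
    rw [show j+i+2 = i+j+2 from by omega]
    push_cast
    ring
  have e2 : (∑ a ∈ range (n+1), ∑ b ∈ range (n+1-a),
        ((a + (m+1) - 1).choose a : ℝ) * ((((m+1):ℕ) - 1).choose b : ℝ) * (1-q)^b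
          * Zt q (((m+1:ℕ):ℝ) + t + (a:ℝ)) ((n+1) - a - b) i j)
      = (gg q (i+j+2) ^ t * ((q:ℝ)^(i+j+2))⁻¹)
          * S1f (gg q (j+1)) (gg q (i+j+2)) (1-q) n m := by
    unfold S1f
    rw [Finset.mul_sum]
    apply Finset.sum_congr rfl
    intro a ha
    rw [Finset.mul_sum]
    apply Finset.sum_congr rfl
    intro b hb
    have ha' : a ≤ n := by have := Finset.mem_range.mp ha; omega
    have hb' : b ≤ n - a := by have := Finset.mem_range.mp hb; omega
    have ew : (n+1) - a - b = (n-a-b)+1 := by omega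
    have ec1 : a + (m+1) - 1 = a + m := by omega
    have ec2 : ((m+1):ℕ) - 1 = m := by omega
    rw [ew, ec1, ec2, Zt_eq hq _ _ i j]
    rw [Zpt hq t (m+1) a (n-a-b) i j]
    push_cast
    ring
  have e3 : (∑ k ∈ range (m+1),
        ((m+n-k).choose (m-k) : ℝ) * (n.choose k : ℝ) * (1-q)^(k+1)
          * Fq q (((m+1:ℕ):ℝ) + ((n+1:ℕ):ℝ) + t - ((k+1:ℕ):ℝ)) (i+j+1))
      = (gg q (i+j+2) ^ t * ((q:ℝ)^(i+j+2))⁻¹) * S3f (gg q (i+j+2)) (1-q) m n := by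
    unfold S3f
    rw [Finset.mul_sum]
    apply Finset.sum_congr rfl
    intro k hk
    have hk' : k ≤ m := by have := Finset.mem_range.mp hk; omega
    rw [Kpt hq t m n k i j hk']
    push_cast
    ring
  rw [e1, e2, e3, Lpt hq]
  rw [hstar]
  ring

lemma sumZswap {q : ℝ} (hq : 1 < q) (p : ℝ) (w : ℕ) :
    Summable (fun x : ℕ × ℕ => Zt q p w x.2 x.1) :=
  ((sumZ hq p w).1).prod_symm

lemma qzeta_repr {q : ℝ} (hq : 1 < q) (p : ℝ) (w : ℕ) :
    qzeta q p w = ∑' x : ℕ × ℕ, Zt q p w x.1 x.2 :=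
  (Summable.tsum_prod' (sumZ hq p w).1 (sumZ hq p w).2).symm

lemma qzeta_repr_swap {q : ℝ} (hq : 1 < q) (p : ℝ) (w : ℕ) :
    qzeta q p w = ∑' x : ℕ × ℕ, Zt q p w x.2 x.1 := by
  rw [qzeta_repr hq]
  exact (Equiv.prodComm ℕ ℕ).tsum_eq (fun x : ℕ × ℕ => Zt q p w x.2 x.1)

lemma qphi_repr' {q : ℝ} (hq : 1 < q) (W : ℝ) :
    qphi q W = ∑' x : ℕ × ℕ, Fq q W (x.1 + x.2 + 1) :=
  (qphi_repr hq W).symm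

lemma pull2 {M : ℕ} {Kf : ℕ → ℕ} (coef : ℕ → ℕ → ℝ) (F : ℕ → ℕ → ℕ × ℕ → ℝ)
    (hsum : ∀ a b, Summable (F a b)) :
    ∑ a ∈ range M, ∑ b ∈ range (Kf a), coef a b * (∑' x : ℕ × ℕ, F a b x)
      = ∑' x : ℕ × ℕ, ∑ a ∈ range M, ∑ b ∈ range (Kf a), coef a b * F a b x := by
  calc ∑ a ∈ range M, ∑ b ∈ range (Kf a), coef a b * (∑' x : ℕ × ℕ, F a b x)
      = ∑ a ∈ range M, ∑ b ∈ range (Kf a), (∑' x : ℕ × ℕ, coef a b * F a b x) := by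
        apply Finset.sum_congr rfl; intro a _
        apply Finset.sum_congr rfl; intro b _
        exact tsum_mul_left.symm
    _ = ∑ a ∈ range M, (∑' x : ℕ × ℕ, ∑ b ∈ range (Kf a), coef a b * F a b x) := by
        apply Finset.sum_congr rfl; intro a _
        exact (Summable.tsum_finsetSum (fun b _ => (hsum a b).mul_left _)).symm
    _ = ∑' x : ℕ × ℕ, ∑ a ∈ range M, ∑ b ∈ range (Kf a), coef a b * F a b x :=
        (Summable.tsum_finsetSum (fun a _ => summable_sum (fun b _ => (hsum a b).mul_left _))).symm

lemma pull1 {M : ℕ} (coef : ℕ → ℝ) (F : ℕ → ℕ × ℕ → ℝ)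
    (hsum : ∀ k, Summable (F k)) :
    ∑ k ∈ range M, coef k * (∑' x : ℕ × ℕ, F k x)
      = ∑' x : ℕ × ℕ, ∑ k ∈ range M, coef k * F k x := by
  calc ∑ k ∈ range M, coef k * (∑' x : ℕ × ℕ, F k x)
      = ∑ k ∈ range M, (∑' x : ℕ × ℕ, coef k * F k x) := by
        apply Finset.sum_congr rfl; intro k _
        exact tsum_mul_left.symm
    _ = ∑' x : ℕ × ℕ, ∑ k ∈ range M, coef k * F k x :=
        (Summable.tsum_finsetSum (fun k _ => (hsum k).mul_left _)).symm

lemma phi3_conv {q : ℝ} (hq : 1 < q) (t : ℝ) (m n : ℕ) :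
    (∑ j ∈ Finset.Icc 1 (min (m+1) (n+1)),
        ((m+1+(n+1)-j-1).choose (m+1-j) : ℝ) * (((n+1)-1).choose ((n+1)-j) : ℝ) * (1-q)^j
          * qphi q (((m+1:ℕ):ℝ) + ((n+1:ℕ):ℝ) + t - (j:ℝ)))
      = ∑ k ∈ range (m+1),
          ((m+n-k).choose (m-k) : ℝ) * (n.choose k : ℝ) * (1-q)^(k+1)
            * qphi q (((m+1:ℕ):ℝ) + ((n+1:ℕ):ℝ) + t - ((k+1:ℕ):ℝ)) := by
  rw [show min (m+1) (n+1) = (min m n) + 1 from by omega]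
  rw [icc_range]
  have hcong : ∀ k ∈ range (min m n + 1),
      ((m+1+(n+1)-(k+1)-1).choose (m+1-(k+1)) : ℝ) * (((n+1)-1).choose ((n+1)-(k+1)) : ℝ)
          * (1-q)^(k+1) * qphi q (((m+1:ℕ):ℝ) + ((n+1:ℕ):ℝ) + t - ((k+1:ℕ):ℝ))
        = ((m+n-k).choose (m-k) : ℝ) * (n.choose k : ℝ) * (1-q)^(k+1)
            * qphi q (((m+1:ℕ):ℝ) + ((n+1:ℕ):ℝ) + t - ((k+1:ℕ):ℝ)) := by
    intro k hk
    have hk' : k ≤ min m n := by have := Finset.mem_range.mp hk; omega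
    have hkn : k ≤ n := by omega
    have e1 : m+1+(n+1)-(k+1)-1 = m+n-k := by omega
    have e2 : m+1-(k+1) = m-k := by omega
    have e3 : (n+1)-1 = n := by omega
    have e4 : (n+1)-(k+1) = n-k := by omega
    rw [e1, e2, e3, e4, Nat.choose_symm hkn]
  rw [Finset.sum_congr rfl hcong]
  apply Finset.sum_subset (Finset.range_subset_range.mpr (by omega))
  intro k hk1 hk2
  have hnk : n < k := by
    have h1 := Finset.mem_range.mp hk1
    have h2 : ¬ (k < min m n + 1) := fun h => hk2 (Finset.mem_range.mpr h)
    omega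
  rw [Nat.choose_eq_zero_of_lt hnk]
  simp

set_option maxHeartbeats 2000000 in
theorem stmt19 (q : ℝ) (hq : 1 < q) (r s : ℕ) (hr : 0 < r) (hs : 0 < s) (t : ℝ) :
    (∑' (u : ℕ) (v : ℕ),
        q ^ (((r : ℝ) + t - 1) * ((u : ℝ) + 1) + ((s : ℝ) + t - 1) * ((v : ℝ) + 1)) /
          (qa q (u + 1) ^ r * qa q (v + 1) ^ s * qa q (u + v + 2) ^ t)) =
      (∑ a ∈ Finset.range r, ∑ b ∈ Finset.range (r - a),
        ((a + s - 1).choose a * (s - 1).choose b : ℝ) * (1 - q) ^ b *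
          qzeta q ((s : ℝ) + t + a) (r - a - b))
      + (∑ a ∈ Finset.range s, ∑ b ∈ Finset.range (s - a),
        ((a + r - 1).choose a * (r - 1).choose b : ℝ) * (1 - q) ^ b *
          qzeta q ((r : ℝ) + t + a) (s - a - b))
      - (∑ j ∈ Finset.Icc 1 (min r s),
        ((r + s - j - 1).choose (r - j) * (s - 1).choose (s - j) : ℝ) * (1 - q) ^ j *
          qphi q ((r : ℝ) + (s : ℝ) + t - j)) := by
  obtain ⟨m, rfl⟩ : ∃ m, r = m+1 := ⟨r-1, by omega⟩
  obtain ⟨n, rfl⟩ : ∃ n, s = n+1 := ⟨s-1, by omega⟩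
  have hL := sumL hq (m+1) (n+1) t
  have hG1 : Summable (fun x : ℕ × ℕ =>
      ∑ a ∈ range (m+1), ∑ b ∈ range ((m+1)-a),
        ((a + (n+1) - 1).choose a : ℝ) * ((((n+1):ℕ) - 1).choose b : ℝ) * (1-q)^b
          * Zt q (((n+1:ℕ):ℝ) + t + (a:ℝ)) ((m+1) - a - b) x.2 x.1) :=
    summable_sum (fun a _ => summable_sum (fun b _ => (sumZswap hq _ _).mul_left _))
  have hG2 : Summable (fun x : ℕ × ℕ =>
      ∑ a ∈ range (n+1), ∑ b ∈ range ((n+1)-a),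
        ((a + (m+1) - 1).choose a : ℝ) * ((((m+1):ℕ) - 1).choose b : ℝ) * (1-q)^b
          * Zt q (((m+1:ℕ):ℝ) + t + (a:ℝ)) ((n+1) - a - b) x.1 x.2) :=
    summable_sum (fun a _ => summable_sum (fun b _ => ((sumZ hq _ _).1).mul_left _))
  have hG3 : Summable (fun x : ℕ × ℕ =>
      ∑ k ∈ range (m+1),
        ((m+n-k).choose (m-k) : ℝ) * (n.choose k : ℝ) * (1-q)^(k+1)
          * Fq q (((m+1:ℕ):ℝ) + ((n+1:ℕ):ℝ) + t - ((k+1:ℕ):ℝ)) (x.1+x.2+1)) :=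
    summable_sum (fun k _ => (sumK hq _).mul_left _)
  refine Eq.trans ((Summable.tsum_prod' hL.1 hL.2).symm :
      _ = ∑' x : ℕ × ℕ, Lt q (m+1) (n+1) t x.1 x.2) ?_
  calc ∑' x : ℕ × ℕ, Lt q (m+1) (n+1) t x.1 x.2
      = ∑' x : ℕ × ℕ,
          ((∑ a ∈ range (m+1), ∑ b ∈ range ((m+1)-a),
            ((a + (n+1) - 1).choose a : ℝ) * ((((n+1):ℕ) - 1).choose b : ℝ) * (1-q)^b
              * Zt q (((n+1:ℕ):ℝ) + t + (a:ℝ)) ((m+1) - a - b) x.2 x.1)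
          + (∑ a ∈ range (n+1), ∑ b ∈ range ((n+1)-a),
            ((a + (m+1) - 1).choose a : ℝ) * ((((m+1):ℕ) - 1).choose b : ℝ) * (1-q)^b
              * Zt q (((m+1:ℕ):ℝ) + t + (a:ℝ)) ((n+1) - a - b) x.1 x.2)
          - (∑ k ∈ range (m+1),
            ((m+n-k).choose (m-k) : ℝ) * (n.choose k : ℝ) * (1-q)^(k+1)
              * Fq q (((m+1:ℕ):ℝ) + ((n+1:ℕ):ℝ) + t - ((k+1:ℕ):ℝ)) (x.1+x.2+1))) :=
        tsum_congr (fun x => (pointwise hq t m n x.1 x.2).symm)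
    _ = (∑' x : ℕ × ℕ,
          ((∑ a ∈ range (m+1), ∑ b ∈ range ((m+1)-a),
            ((a + (n+1) - 1).choose a : ℝ) * ((((n+1):ℕ) - 1).choose b : ℝ) * (1-q)^b
              * Zt q (((n+1:ℕ):ℝ) + t + (a:ℝ)) ((m+1) - a - b) x.2 x.1)
          + (∑ a ∈ range (n+1), ∑ b ∈ range ((n+1)-a),
            ((a + (m+1) - 1).choose a : ℝ) * ((((m+1):ℕ) - 1).choose b : ℝ) * (1-q)^b
              * Zt q (((m+1:ℕ):ℝ) + t + (a:ℝ)) ((n+1) - a - b) x.1 x.2)))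
        - (∑' x : ℕ × ℕ,
            ∑ k ∈ range (m+1),
              ((m+n-k).choose (m-k) : ℝ) * (n.choose k : ℝ) * (1-q)^(k+1)
                * Fq q (((m+1:ℕ):ℝ) + ((n+1:ℕ):ℝ) + t - ((k+1:ℕ):ℝ)) (x.1+x.2+1)) :=
        Summable.tsum_sub (hG1.add hG2) hG3
    _ = ((∑' x : ℕ × ℕ,
          ∑ a ∈ range (m+1), ∑ b ∈ range ((m+1)-a),
            ((a + (n+1) - 1).choose a : ℝ) * ((((n+1):ℕ) - 1).choose b : ℝ) * (1-q)^b
              * Zt q (((n+1:ℕ):ℝ) + t + (a:ℝ)) ((m+1) - a - b) x.2 x.1)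
        + (∑' x : ℕ × ℕ,
          ∑ a ∈ range (n+1), ∑ b ∈ range ((n+1)-a),
            ((a + (m+1) - 1).choose a : ℝ) * ((((m+1):ℕ) - 1).choose b : ℝ) * (1-q)^b
              * Zt q (((m+1:ℕ):ℝ) + t + (a:ℝ)) ((n+1) - a - b) x.1 x.2))
        - (∑' x : ℕ × ℕ,
            ∑ k ∈ range (m+1),
              ((m+n-k).choose (m-k) : ℝ) * (n.choose k : ℝ) * (1-q)^(k+1)
                * Fq q (((m+1:ℕ):ℝ) + ((n+1:ℕ):ℝ) + t - ((k+1:ℕ):ℝ)) (x.1+x.2+1)) := by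
        rw [Summable.tsum_add hG1 hG2]
    _ = (∑ a ∈ Finset.range (m+1), ∑ b ∈ Finset.range ((m+1) - a),
          ((a + (n+1) - 1).choose a * ((n+1) - 1).choose b : ℝ) * (1 - q) ^ b *
            qzeta q (((n+1:ℕ):ℝ) + t + (a:ℝ)) ((m+1) - a - b))
        + (∑ a ∈ Finset.range (n+1), ∑ b ∈ Finset.range ((n+1) - a),
          ((a + (m+1) - 1).choose a * ((m+1) - 1).choose b : ℝ) * (1 - q) ^ b *
            qzeta q (((m+1:ℕ):ℝ) + t + (a:ℝ)) ((n+1) - a - b))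
        - (∑ j ∈ Finset.Icc 1 (min (m+1) (n+1)),
          ((m+1 + (n+1) - j - 1).choose (m+1 - j) * ((n+1) - 1).choose ((n+1) - j) : ℝ) *
            (1 - q) ^ j * qphi q (((m+1:ℕ):ℝ) + ((n+1:ℕ):ℝ) + t - (j:ℝ))) := by
        rw [← pull2 _ _ (fun a b => sumZswap hq (((n+1:ℕ):ℝ) + t + (a:ℝ)) ((m+1) - a - b))]
        rw [← pull2 _ _ (fun a b => (sumZ hq (((m+1:ℕ):ℝ) + t + (a:ℝ)) ((n+1) - a - b)).1)]
        rw [← pull1 _ _ (fun k => sumK hq (((m+1:ℕ):ℝ) + ((n+1:ℕ):ℝ) + t - ((k+1:ℕ):ℝ)))]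
        rw [phi3_conv hq t m n]
        congr 1
        · congr 1
          · apply Finset.sum_congr rfl; intro a _
            apply Finset.sum_congr rfl; intro b _
            rw [qzeta_repr_swap hq]
          · apply Finset.sum_congr rfl; intro a _
            apply Finset.sum_congr rfl; intro b _
            rw [qzeta_repr hq]
        · apply Finset.sum_congr rfl; intro k _
          rw [qphi_repr' hq]
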